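/- arXiv:1211.1876 — 3 statements merged into one kernel-verified Lean document; each statement's English description precedes it below -/
import Mathlib

section
/- Let F be a field and G a finite group whose order is not divisible by the characteristic of F, and let V be a G-module. Then the Noether number satisfies β(F[V]^G) ≤ topdeg F[V]_G + 1; that is, the invariant ring F[V]^G is generated as an F-algebra by its homogeneous elements of degree at most topdeg F[V]_G + 1. -/
open MvPolynomial

variable {F G ι : Type*} [Field F] [Group G] [Fintype ι] [DecidableEq ι]

/-- The (left) action of a group element `σ` on the polynomial algebra
`F[V] = S(V^*)` presented as `MvPolynomial ι F`, for a matrix representation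
`ρ : G →* GL(ι, F)` of `G` on `V = (ι → F)`.  It is given by `σ • f = f ∘ σ⁻¹`,
i.e. by linear substitution of the variables using the matrix of `ρ σ⁻¹`. -/
noncomputable def polyAct (ρ : G →* (Matrix ι ι F)ˣ) (σ : G)
    (f : MvPolynomial ι F) : MvPolynomial ι F :=
  MvPolynomial.aeval
    (fun i => ∑ j, ((ρ σ⁻¹ : Matrix ι ι F) i j) • (MvPolynomial.X j : MvPolynomial ι F)) f

/-- A polynomial is invariant if it is fixed by the action of every group element. -/
def IsInv (ρ : G →* (Matrix ι ι F)ˣ) (f : MvPolynomial ι F) : Prop :=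
  ∀ σ : G, polyAct ρ σ f = f

/-- The Hilbert ideal: the ideal of `F[V]` generated by the homogeneous invariants
of positive degree. -/
noncomputable def hilbertIdeal (ρ : G →* (Matrix ι ι F)ˣ) : Ideal (MvPolynomial ι F) :=
  Ideal.span {f : MvPolynomial ι F | (∃ d, 0 < d ∧ f.IsHomogeneous d) ∧ IsInv ρ f}

/-- The top degree of the coinvariant algebra `F[V]_G = F[V]/(Hilbert ideal)`:
the largest degree `d` such that the degree-`d` homogeneous component of `F[V]_G`
is nonzero; since the Hilbert ideal is homogeneous this is the largest `d` for
which some homogeneous polynomial of degree `d` is not in the Hilbert ideal. -/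
noncomputable def topDeg (ρ : G →* (Matrix ι ι F)ˣ) : ℕ :=
  sSup {d : ℕ | ∃ f : MvPolynomial ι F, f.IsHomogeneous d ∧ f ∉ hilbertIdeal ρ}

/-- The dimension of the coinvariant algebra `F[V]_G` as an `F`-vector space. -/
noncomputable def coinvDim (ρ : G →* (Matrix ι ι F)ˣ) : ℕ :=
  Module.finrank F (MvPolynomial ι F ⧸ hilbertIdeal ρ)

/-- The invariant ring `F[V]^G` as a subalgebra of `F[V]`. -/
noncomputable def invAlg (ρ : G →* (Matrix ι ι F)ˣ) : Subalgebra F (MvPolynomial ι F) where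
  carrier := {f | IsInv ρ f}
  mul_mem' := by
    intro a b ha hb σ
    have h : polyAct ρ σ (a * b) = polyAct ρ σ a * polyAct ρ σ b :=
      map_mul (MvPolynomial.aeval _) a b
    rw [h, ha σ, hb σ]
  add_mem' := by
    intro a b ha hb σ
    have h : polyAct ρ σ (a + b) = polyAct ρ σ a + polyAct ρ σ b :=
      map_add (MvPolynomial.aeval _) a b
    rw [h, ha σ, hb σ]
  algebraMap_mem' := by
    intro r σ
    exact (MvPolynomial.aeval _).commutes r

section Aux

variable (ρ : G →* (Matrix ι ι F)ˣ)

lemma polyAct_one (f : MvPolynomial ι F) : polyAct ρ 1 f = f := by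
  unfold polyAct
  simp only [inv_one, map_one, Units.val_one, Matrix.one_apply, ite_smul, one_smul, zero_smul]
  rw [show (fun i => ∑ j, if i = j then (X j : MvPolynomial ι F) else 0) = X by
    funext i; simp [Finset.sum_ite_eq]]
  simp [aeval_X_left]

lemma polyAct_polyAct (σ τ : G) (f : MvPolynomial ι F) :
    polyAct ρ σ (polyAct ρ τ f) = polyAct ρ (σ * τ) f := by
  unfold polyAct
  rw [← AlgHom.comp_apply, MvPolynomial.comp_aeval]
  have hfun : (fun i => (aeval fun i => ∑ j : ι, ((ρ σ⁻¹ : Matrix ι ι F)) i j • (X j : MvPolynomial ι F))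
      (∑ j : ι, ((ρ τ⁻¹ : Matrix ι ι F)) i j • (X j : MvPolynomial ι F)))
      = fun i => ∑ j : ι, ((ρ (σ * τ)⁻¹ : Matrix ι ι F)) i j • (X j : MvPolynomial ι F) := by
    funext i
    rw [map_sum]
    simp only [map_smul, aeval_X, Finset.smul_sum, smul_smul]
    rw [Finset.sum_comm]
    refine Finset.sum_congr rfl fun k _ => ?_
    rw [← Finset.sum_smul]
    congr 1
    rw [mul_inv_rev, map_mul, Units.val_mul, Matrix.mul_apply]
  rw [hfun]

lemma polyAct_smul (σ : G) (c : F) (f : MvPolynomial ι F) :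
    polyAct ρ σ (c • f) = c • polyAct ρ σ f := by
  unfold polyAct; exact map_smul _ c f

lemma polyAct_add (σ : G) (f g : MvPolynomial ι F) :
    polyAct ρ σ (f + g) = polyAct ρ σ f + polyAct ρ σ g := map_add (aeval _) f g

lemma polyAct_mul (σ : G) (f g : MvPolynomial ι F) :
    polyAct ρ σ (f * g) = polyAct ρ σ f * polyAct ρ σ g := map_mul (aeval _) f g

lemma polyAct_sum {α : Type*} (σ : G) (s : Finset α) (f : α → MvPolynomial ι F) :
    polyAct ρ σ (∑ a ∈ s, f a) = ∑ a ∈ s, polyAct ρ σ (f a) := map_sum (aeval _) f s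

lemma polyAct_isHomogeneous (σ : G) {f : MvPolynomial ι F} {d : ℕ}
    (hf : f.IsHomogeneous d) : (polyAct ρ σ f).IsHomogeneous d := by
  have hg : ∀ i, ((∑ j, ((ρ σ⁻¹ : Matrix ι ι F) i j) • (X j : MvPolynomial ι F))).IsHomogeneous 1 := by
    intro i
    apply IsHomogeneous.sum
    intro j _
    rw [smul_eq_C_mul]
    exact isHomogeneous_C_mul_X _ _
  have h2 := hf.aeval (fun i => ∑ j, ((ρ σ⁻¹ : Matrix ι ι F) i j) • (X j : MvPolynomial ι F)) hg
  rw [one_mul] at h2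
  exact h2

lemma polyAct_homogeneousComponent (σ : G) (n : ℕ) (f : MvPolynomial ι F) :
    polyAct ρ σ (homogeneousComponent n f) = homogeneousComponent n (polyAct ρ σ f) := by
  conv_rhs => rw [← sum_homogeneousComponent f]
  rw [polyAct_sum, map_sum]
  have : ∀ k, homogeneousComponent n (polyAct ρ σ (homogeneousComponent k f))
      = if n = k then polyAct ρ σ (homogeneousComponent k f) else 0 := fun k =>
    homogeneousComponent_of_mem (polyAct_isHomogeneous ρ σ (homogeneousComponent_isHomogeneous k f))
  simp_rw [this]
  rw [Finset.sum_ite_eq (Finset.range (f.totalDegree + 1)) n]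
  by_cases hn : n ∈ Finset.range (f.totalDegree + 1)
  · rw [if_pos hn]
  · rw [if_neg hn]
    rw [Finset.mem_range, not_lt] at hn
    rw [homogeneousComponent_eq_zero n f (by omega)]
    simp [polyAct]

lemma isInv_homogeneousComponent {f : MvPolynomial ι F} (hf : IsInv ρ f) (n : ℕ) :
    IsInv ρ (homogeneousComponent n f) := by
  intro σ
  rw [polyAct_homogeneousComponent, hf σ]

section Rey
variable [Fintype G]

noncomputable def rey (f : MvPolynomial ι F) : MvPolynomial ι F :=
  (Fintype.card G : F)⁻¹ • ∑ σ : G, polyAct ρ σ f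

lemma rey_isInv (f : MvPolynomial ι F) : IsInv ρ (rey ρ f) := by
  intro τ
  unfold rey
  rw [polyAct_smul, polyAct_sum]
  congr 1
  simp_rw [polyAct_polyAct]
  exact Fintype.sum_equiv (Equiv.mulLeft τ) _ _ (fun σ => rfl)

lemma rey_of_isInv (hchar : (Fintype.card G : F) ≠ 0) {f : MvPolynomial ι F}
    (hf : IsInv ρ f) : rey ρ f = f := by
  unfold rey
  have : ∀ σ : G, polyAct ρ σ f = f := hf
  simp_rw [this, Finset.sum_const, Finset.card_univ]
  rw [← Nat.cast_smul_eq_nsmul F, smul_smul, inv_mul_cancel₀ hchar, one_smul]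

lemma rey_smul (c : F) (f : MvPolynomial ι F) : rey ρ (c • f) = c • rey ρ f := by
  unfold rey
  simp_rw [polyAct_smul, Finset.smul_sum, smul_comm c]

lemma rey_add (f g : MvPolynomial ι F) : rey ρ (f + g) = rey ρ f + rey ρ g := by
  unfold rey
  simp_rw [polyAct_add, Finset.sum_add_distrib, smul_add]

lemma polyAct_zero (σ : G) : polyAct ρ σ (0 : MvPolynomial ι F) = 0 := map_zero (aeval _)

lemma rey_zero : rey ρ (0 : MvPolynomial ι F) = 0 := by
  unfold rey
  simp_rw [polyAct_zero, Finset.sum_const_zero, smul_zero]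

lemma rey_mul_isInv {g : MvPolynomial ι F} (hg : IsInv ρ g) (h : MvPolynomial ι F) :
    rey ρ (h * g) = rey ρ h * g := by
  unfold rey
  simp_rw [polyAct_mul]
  have h2 : ∀ σ : G, polyAct ρ σ h * polyAct ρ σ g = polyAct ρ σ h * g := fun σ => by rw [hg σ]
  simp_rw [h2]
  rw [← Finset.sum_mul, smul_mul_assoc]

lemma rey_isHomogeneous {f : MvPolynomial ι F} {d : ℕ} (hf : f.IsHomogeneous d) :
    (rey ρ f).IsHomogeneous d := by
  rw [← mem_homogeneousSubmodule]
  unfold rey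
  exact Submodule.smul_mem _ _ (Submodule.sum_mem _ fun σ _ =>
    (mem_homogeneousSubmodule _ _).2 (polyAct_isHomogeneous ρ σ hf))

end Rey

section Vieta

lemma coeff_prod_X_sub_C_isHomogeneous {α : Type*} [DecidableEq α] (s : Finset α)
    (r : α → MvPolynomial ι F) (hr : ∀ a, (r a).IsHomogeneous 1) (k : ℕ) :
    ((∏ a ∈ s, (Polynomial.X - Polynomial.C (r a))).coeff k).IsHomogeneous (s.card - k) := by
  induction s using Finset.induction_on generalizing k with
  | empty =>
    simp only [Finset.prod_empty, Polynomial.coeff_one, Finset.card_empty]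
    by_cases hk : k = 0
    · subst hk
      simp only [if_pos rfl, Nat.zero_sub]
      exact isHomogeneous_one ι F
    · rw [if_neg hk]
      exact isHomogeneous_zero _ _ _
  | @insert a s ha IH =>
    have hmonic : (∏ b ∈ s, (Polynomial.X - Polynomial.C (r b))).Monic :=
      Polynomial.monic_prod_of_monic _ _ fun b _ => Polynomial.monic_X_sub_C _
    have hdeg : (∏ b ∈ s, (Polynomial.X - Polynomial.C (r b))).natDegree = s.card := by
      rw [Polynomial.natDegree_prod_of_monic _ _ fun b _ => Polynomial.monic_X_sub_C _]
      simp [Polynomial.natDegree_X_sub_C]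
    rw [Finset.prod_insert ha, Finset.card_insert_of_notMem ha, sub_mul, Polynomial.coeff_sub,
      Polynomial.coeff_C_mul]
    cases k with
    | zero =>
      rw [Polynomial.mul_coeff_zero, Polynomial.coeff_X_zero, zero_mul, zero_sub]
      have h1 := (hr a).mul (IH 0)
      have heq : 1 + (s.card - 0) = s.card + 1 - 0 := by omega
      rw [heq] at h1
      exact h1.neg
    | succ k =>
      rw [Polynomial.coeff_X_mul]
      have heq : s.card + 1 - (k + 1) = s.card - k := by omega
      rw [heq]
      by_cases hk : k < s.card
      · have h2 := (hr a).mul (IH (k + 1))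
        have heq2 : 1 + (s.card - (k + 1)) = s.card - k := by omega
        rw [heq2] at h2
        exact (IH k).sub h2
      · have hz : (∏ b ∈ s, (Polynomial.X - Polynomial.C (r b))).coeff (k + 1) = 0 :=
          Polynomial.coeff_eq_zero_of_natDegree_lt (by rw [hdeg]; omega)
        rw [hz, mul_zero, sub_zero]
        exact IH k

variable [Fintype G]

lemma polyAct_X_isHomogeneous (τ : G) (i : ι) :
    (polyAct ρ τ (X i : MvPolynomial ι F)).IsHomogeneous 1 :=
  polyAct_isHomogeneous ρ τ (isHomogeneous_X _ _)

lemma isInv_coeff_prod (i : ι) (k : ℕ) :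
    IsInv ρ ((∏ τ : G, (Polynomial.X - Polynomial.C (polyAct ρ τ (X i)))).coeff k) := by
  intro σ
  have hmap : polyAct ρ σ ((∏ τ : G, (Polynomial.X - Polynomial.C (polyAct ρ τ (X i)))).coeff k)
      = ((∏ τ : G, (Polynomial.X - Polynomial.C (polyAct ρ τ (X i)))).map
          ((aeval (fun i => ∑ j, ((ρ σ⁻¹ : Matrix ι ι F) i j) • (X j : MvPolynomial ι F))
            : MvPolynomial ι F →ₐ[F] MvPolynomial ι F) : MvPolynomial ι F →+* MvPolynomial ι F)).coeff k := by
    rw [Polynomial.coeff_map]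
    rfl
  rw [hmap, Polynomial.map_prod]
  congr 1
  have : ∀ τ : G, ((Polynomial.X - Polynomial.C (polyAct ρ τ (X i))).map
      ((aeval (fun i => ∑ j, ((ρ σ⁻¹ : Matrix ι ι F) i j) • (X j : MvPolynomial ι F))
        : MvPolynomial ι F →ₐ[F] MvPolynomial ι F) : MvPolynomial ι F →+* MvPolynomial ι F))
      = Polynomial.X - Polynomial.C (polyAct ρ (σ * τ) (X i)) := by
    intro τ
    rw [Polynomial.map_sub, Polynomial.map_X, Polynomial.map_C]
    congr 1
    exact congrArg _ (polyAct_polyAct ρ σ τ (X i))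
  simp_rw [this]
  exact Fintype.prod_equiv (Equiv.mulLeft σ) _ _ (fun τ => rfl)

lemma X_pow_card_mem (i : ι) :
    (X i : MvPolynomial ι F) ^ (Fintype.card G) ∈ hilbertIdeal ρ := by
  classical
  set N := Fintype.card G with hN
  set P := ∏ τ : G, (Polynomial.X - Polynomial.C (polyAct ρ τ (X i))) with hP
  have hmonic : P.Monic := Polynomial.monic_prod_of_monic _ _ fun τ _ => Polynomial.monic_X_sub_C _
  have hdeg : P.natDegree = N := by
    rw [hP, Polynomial.natDegree_prod_of_monic _ _ fun τ _ => Polynomial.monic_X_sub_C _]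
    simp [Polynomial.natDegree_X_sub_C, hN]
  have heval : P.eval (X i) = 0 := by
    rw [hP, Polynomial.eval_prod]
    refine Finset.prod_eq_zero (Finset.mem_univ (1 : G)) ?_
    rw [polyAct_one, Polynomial.eval_sub, Polynomial.eval_X, Polynomial.eval_C, sub_self]
  have hsum : ∑ k ∈ Finset.range (N + 1), P.coeff k * (X i) ^ k = 0 := by
    rw [← Polynomial.eval_eq_sum_range' (n := N + 1) (by omega)]
    exact heval
  rw [Finset.sum_range_succ] at hsum
  have hcoeffN : P.coeff N = 1 := by
    have := hmonic.coeff_natDegree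
    rwa [hdeg] at this
  rw [hcoeffN, one_mul] at hsum
  have hmem : ∑ k ∈ Finset.range N, P.coeff k * (X i) ^ k ∈ hilbertIdeal ρ := by
    refine Submodule.sum_mem _ fun k hk => ?_
    refine Ideal.mul_mem_right _ _ (Ideal.subset_span ?_)
    refine ⟨⟨N - k, by have := Finset.mem_range.mp hk; omega, ?_⟩, isInv_coeff_prod ρ i k⟩
    have := coeff_prod_X_sub_C_isHomogeneous (Finset.univ : Finset G)
      (fun τ => polyAct ρ τ (X i)) (polyAct_X_isHomogeneous ρ · i) k
    rwa [Finset.card_univ] at this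
  have : (X i : MvPolynomial ι F) ^ N = -(∑ k ∈ Finset.range N, P.coeff k * (X i) ^ k) :=
    eq_neg_of_add_eq_zero_right hsum
  rw [this]
  exact Submodule.neg_mem _ hmem

end Vieta

section HighDeg
variable [Fintype G]

lemma high_degree_mem {d : ℕ} (hd : Fintype.card ι * (Fintype.card G - 1) < d)
    {f : MvPolynomial ι F} (hf : f.IsHomogeneous d) : f ∈ hilbertIdeal ρ := by
  classical
  nth_rewrite 1 [f.as_sum]
  refine Submodule.sum_mem _ fun s hs => ?_
  have hsd : ∑ j, s j = d := by
    have h1 := hf (mem_support_iff.mp hs)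
    rw [← h1]
    rw [show ((Finsupp.weight 1) s : ℕ) = ∑ a ∈ s.support, s a by
      simp [Finsupp.weight_apply, Finsupp.sum]]
    exact (Finset.sum_subset (Finset.subset_univ _) (fun x _ hx => by
      simpa using Finsupp.notMem_support_iff.mp hx)).symm
  have hex : ∃ i : ι, Fintype.card G ≤ s i := by
    by_contra hc
    push_neg at hc
    have : ∑ j, s j ≤ Fintype.card ι * (Fintype.card G - 1) := by
      calc ∑ j, s j ≤ ∑ _j : ι, (Fintype.card G - 1) :=
            Finset.sum_le_sum fun j _ => by have := hc j; omega
        _ = Fintype.card ι * (Fintype.card G - 1) := by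
            rw [Finset.sum_const, Finset.card_univ, smul_eq_mul]
    omega
  obtain ⟨i, hi⟩ := hex
  have hle : Finsupp.single i (Fintype.card G) ≤ s := Finsupp.single_le_iff.mpr hi
  have : monomial s (coeff s f)
      = monomial (s - Finsupp.single i (Fintype.card G)) (coeff s f)
        * (X i : MvPolynomial ι F) ^ (Fintype.card G) := by
    rw [X_pow_eq_monomial, monomial_mul, tsub_add_cancel_of_le hle, mul_one]
  rw [this]
  exact Ideal.mul_mem_left _ _ (X_pow_card_mem ρ i)

lemma mem_of_topDeg_lt {d : ℕ} (hd : topDeg ρ < d)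
    {f : MvPolynomial ι F} (hf : f.IsHomogeneous d) : f ∈ hilbertIdeal ρ := by
  by_contra hfH
  have hdS : d ∈ {e : ℕ | ∃ g : MvPolynomial ι F, g.IsHomogeneous e ∧ g ∉ hilbertIdeal ρ} :=
    ⟨f, hf, hfH⟩
  have hbdd : BddAbove {e : ℕ | ∃ g : MvPolynomial ι F, g.IsHomogeneous e ∧ g ∉ hilbertIdeal ρ} := by
    refine ⟨Fintype.card ι * (Fintype.card G - 1), fun e he => ?_⟩
    obtain ⟨g, hg, hgH⟩ := he
    by_contra hlt
    push_neg at hlt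
    exact hgH (high_degree_mem ρ hlt hg)
  exact absurd (le_csSup hbdd hdS) (not_le.mpr hd)

end HighDeg

lemma homogeneousComponent_mul_right {g : MvPolynomial ι F} {e : ℕ} (hg : g.IsHomogeneous e)
    (q : MvPolynomial ι F) (d : ℕ) :
    homogeneousComponent d (q * g) =
      if e ≤ d then homogeneousComponent (d - e) q * g else 0 := by
  conv_lhs => rw [← sum_homogeneousComponent q, Finset.sum_mul, map_sum]
  have hterm : ∀ k, homogeneousComponent d (homogeneousComponent k q * g)
      = if d = k + e then homogeneousComponent k q * g else 0 := fun k =>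
    homogeneousComponent_of_mem
      ((mem_homogeneousSubmodule _ _).2 ((homogeneousComponent_isHomogeneous k q).mul hg))
  simp_rw [hterm]
  by_cases he : e ≤ d
  · rw [if_pos he]
    simp only [show ∀ k : ℕ, (d = k + e) ↔ (k = d - e) from fun k => by omega]
    rw [Finset.sum_ite_eq' (Finset.range (q.totalDegree + 1)) (d - e)]
    by_cases hmem : d - e ∈ Finset.range (q.totalDegree + 1)
    · rw [if_pos hmem]
    · rw [if_neg hmem]
      rw [Finset.mem_range, not_lt] at hmem
      rw [homogeneousComponent_eq_zero (d - e) q (by omega), zero_mul]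
  · rw [if_neg he]
    exact Finset.sum_eq_zero fun k _ => if_neg (by omega)

lemma mul_mem_span_of_mem_hilbert (v h : MvPolynomial ι F) (hv : constantCoeff v = 0)
    (hh : h ∈ hilbertIdeal ρ) :
    v * h ∈ Submodule.span F {p : MvPolynomial ι F | ∃ q g : MvPolynomial ι F,
      constantCoeff q = 0 ∧ ((∃ e, 0 < e ∧ g.IsHomogeneous e) ∧ IsInv ρ g) ∧ p = q * g} := by
  classical
  obtain ⟨c, hcs, hcsum⟩ := Submodule.mem_span_set.mp hh
  rw [← hcsum, Finsupp.sum, Finset.mul_sum]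
  refine Submodule.sum_mem _ fun m hm => ?_
  have hrw : v * (c m • m) = (v * c m) * m := by rw [smul_eq_mul]; ring
  rw [hrw]
  exact Submodule.subset_span
    ⟨v * c m, m, by rw [map_mul, hv, zero_mul], hcs hm, rfl⟩

lemma degree_sub_single (s : ι →₀ ℕ) (i : ι) (hi : 1 ≤ s i) :
    (s - Finsupp.single i 1).degree = s.degree - 1 := by
  have hle : Finsupp.single i 1 ≤ s := Finsupp.single_le_iff.mpr hi
  have hadd : (s - Finsupp.single i 1) + Finsupp.single i 1 = s := tsub_add_cancel_of_le hle
  have h1 : (Finsupp.single i 1 : ι →₀ ℕ).degree = 1 := by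
    rw [Finsupp.degree_eq_weight_one]
    simp [Finsupp.weight_apply, Finsupp.sum_single_index]
  have h2 : s.degree = (s - Finsupp.single i 1).degree + 1 := by
    conv_lhs => rw [← hadd]
    rw [Finsupp.degree_eq_weight_one, map_add, ← Finsupp.degree_eq_weight_one] at *
    rw [h1]
  omega

lemma mem_J {d : ℕ} (hd1 : 0 < d)
    (hstep : ∀ g : MvPolynomial ι F, g.IsHomogeneous (d - 1) → g ∈ hilbertIdeal ρ)
    {f : MvPolynomial ι F} (hf : f.IsHomogeneous d) :
    f ∈ Submodule.span F {p : MvPolynomial ι F | ∃ q g : MvPolynomial ι F,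
      constantCoeff q = 0 ∧ ((∃ e, 0 < e ∧ g.IsHomogeneous e) ∧ IsInv ρ g) ∧ p = q * g} := by
  classical
  nth_rewrite 1 [f.as_sum]
  refine Submodule.sum_mem _ fun s hs => ?_
  have hsd : s.degree = d := by
    have h1 := hf (mem_support_iff.mp hs)
    rw [Finsupp.degree_eq_weight_one]
    exact h1
  have hex : ∃ i : ι, 1 ≤ s i := by
    by_contra hc
    push_neg at hc
    have : s = 0 := by
      ext j
      have := hc j
      simp only [Finsupp.coe_zero, Pi.zero_apply]
      omega
    rw [this] at hsd
    rw [map_zero] at hsd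
    omega
  obtain ⟨i, hi⟩ := hex
  have hle : Finsupp.single i 1 ≤ s := Finsupp.single_le_iff.mpr hi
  have hmon : monomial s (coeff s f)
      = (X i : MvPolynomial ι F) * monomial (s - Finsupp.single i 1) (coeff s f) := by
    rw [X, monomial_mul, one_mul, add_tsub_cancel_of_le hle]
  rw [hmon]
  refine mul_mem_span_of_mem_hilbert ρ _ _ (by simp) (hstep _ ?_)
  exact isHomogeneous_monomial _ (by rw [degree_sub_single s i hi, hsd])

section Main
variable [Fintype G]

lemma key (hchar : (Fintype.card G : F) ≠ 0) :
    ∀ d : ℕ, ∀ f : MvPolynomial ι F, f.IsHomogeneous d → IsInv ρ f →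
      f ∈ Algebra.adjoin F {f : MvPolynomial ι F |
        (∃ e ≤ topDeg ρ + 1, f.IsHomogeneous e) ∧ IsInv ρ f} := by
  intro d
  induction d using Nat.strong_induction_on with
  | _ d IH =>
    intro f hf hinv
    by_cases hd : d ≤ topDeg ρ + 1
    · exact Algebra.subset_adjoin ⟨⟨d, hd, hf⟩, hinv⟩
    push_neg at hd
    have hd1 : 0 < d := by omega
    have hJ := mem_J ρ hd1
      (fun g hg => mem_of_topDeg_lt ρ (by omega) hg) hf
    obtain ⟨n, a, t, hsum⟩ := Submodule.mem_span_set'.mp hJ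
    -- f is homogeneous of degree d, so f = homogeneousComponent d f
    have hfc : homogeneousComponent d f = f := by
      rw [homogeneousComponent_of_mem ((mem_homogeneousSubmodule _ _).2 hf), if_pos rfl]
    have hfr : rey ρ f = f := rey_of_isInv ρ hchar hinv
    have hstep1 : f = ∑ i : Fin n, a i • rey ρ (homogeneousComponent d (t i : MvPolynomial ι F)) := by
      conv_lhs => rw [← hfr, ← hfc, ← hsum]
      rw [map_sum]
      simp_rw [map_smul]
      have : rey ρ (∑ i : Fin n, a i • homogeneousComponent d (t i : MvPolynomial ι F))
          = ∑ i : Fin n, rey ρ (a i • homogeneousComponent d (t i : MvPolynomial ι F)) := by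
        induction (Finset.univ : Finset (Fin n)) using Finset.induction_on with
        | empty => simp [rey_zero]
        | insert _ _ hni IH2 => rw [Finset.sum_insert hni, Finset.sum_insert hni, rey_add, IH2]
      rw [this]
      simp_rw [rey_smul]
    rw [hstep1]
    refine Subalgebra.sum_mem _ fun i _ => Subalgebra.smul_mem _ ?_ _
    obtain ⟨q, g, hq0, ⟨⟨e, he0, hge⟩, hginv⟩, hqg⟩ := (t i).2
    rw [hqg, homogeneousComponent_mul_right hge]
    by_cases hed : e ≤ d
    · rw [if_pos hed, rey_mul_isInv ρ hginv]
      by_cases hed2 : e = d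
      · have hc0 : coeff 0 q = 0 := hq0
        have hz : homogeneousComponent (d - e) q = 0 := by
          rw [hed2, Nat.sub_self, homogeneousComponent_zero, hc0, map_zero]
        rw [hz, rey_zero, zero_mul]
        exact Subalgebra.zero_mem _
      · refine Subalgebra.mul_mem _ ?_ ?_
        · exact IH (d - e) (by omega) _
            (rey_isHomogeneous ρ (homogeneousComponent_isHomogeneous (d - e) q))
            (rey_isInv ρ _)
        · exact IH e (by omega) _ hge hginv
    · rw [if_neg hed, rey_zero]
      exact Subalgebra.zero_mem _
end Main


end Aux

/-- In the non-modular case the Noether number satisfies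
`β(F[V]^G) ≤ topdeg F[V]_G + 1`: the invariant ring is generated as an
`F`-algebra by its homogeneous elements of degree at most `topdeg F[V]_G + 1`. -/
theorem noether_number_le_topDeg_succ [Fintype G] (ρ : G →* (Matrix ι ι F)ˣ)
    (hchar : (Fintype.card G : F) ≠ 0) :
    Algebra.adjoin F {f : MvPolynomial ι F |
        (∃ d ≤ topDeg ρ + 1, f.IsHomogeneous d) ∧ IsInv ρ f} = invAlg ρ := by
  apply le_antisymm
  · exact Algebra.adjoin_le fun f hf => hf.2
  · intro f hf
    have hinv : IsInv ρ f := hf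
    rw [show f = ∑ k ∈ Finset.range (f.totalDegree + 1), homogeneousComponent k f from
      (sum_homogeneousComponent f).symm]
    exact Subalgebra.sum_mem _ fun k _ => key ρ hchar k _
      (homogeneousComponent_isHomogeneous k f) (isInv_homogeneousComponent ρ hinv k)
end

section
/- Let F be a field and G a finite group whose order is not divisible by the characteristic of F, and let V be a G-module. Then topdeg F[V]_G + 1 ≤ |G|; that is, every monomial in F[V] of degree at least |G| lies in the Hilbert ideal. -/
open MvPolynomial

variable {F G ι : Type*} [Field F] [Group G] [Fintype ι] [DecidableEq ι]

/-! ### Auxiliary material -/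

set_option linter.unusedSectionVars false

/-- The action `polyAct ρ σ` packaged as an algebra homomorphism. -/
noncomputable def actA (ρ : G →* (Matrix ι ι F)ˣ) (σ : G) :
    MvPolynomial ι F →ₐ[F] MvPolynomial ι F :=
  MvPolynomial.aeval
    (fun i => ∑ j, ((ρ σ⁻¹ : Matrix ι ι F) i j) • (MvPolynomial.X j : MvPolynomial ι F))

lemma polyAct_eq (ρ : G →* (Matrix ι ι F)ˣ) (σ : G) (f : MvPolynomial ι F) :
    polyAct ρ σ f = actA ρ σ f := rfl

lemma actA_one (ρ : G →* (Matrix ι ι F)ˣ) (f : MvPolynomial ι F) :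
    actA ρ 1 f = f := by
  have h : (fun i => ∑ j, ((ρ (1:G)⁻¹ : Matrix ι ι F) i j) • (X j : MvPolynomial ι F))
      = (X : ι → MvPolynomial ι F) := by
    funext i
    simp [Matrix.one_apply, ite_smul]
  show (MvPolynomial.aeval _) f = f
  rw [h, aeval_X_left_apply]

lemma actA_mul (ρ : G →* (Matrix ι ι F)ˣ) (σ τ : G) (f : MvPolynomial ι F) :
    actA ρ σ (actA ρ τ f) = actA ρ (σ * τ) f := by
  have h : (actA ρ σ).comp (actA ρ τ) = actA ρ (σ * τ) := by
    apply MvPolynomial.algHom_ext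
    intro i
    have hm : ((ρ (σ * τ)⁻¹ : (Matrix ι ι F)ˣ) : Matrix ι ι F)
        = ((ρ τ⁻¹ : (Matrix ι ι F)ˣ) : Matrix ι ι F)
          * ((ρ σ⁻¹ : (Matrix ι ι F)ˣ) : Matrix ι ι F) := by
      rw [mul_inv_rev, map_mul, Units.val_mul]
    simp only [AlgHom.comp_apply, actA, aeval_X, map_sum, map_smul, hm, Matrix.mul_apply,
      Finset.sum_smul, Finset.smul_sum, smul_smul]
    rw [Finset.sum_comm]
  calc actA ρ σ (actA ρ τ f) = ((actA ρ σ).comp (actA ρ τ)) f := rfl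
  _ = actA ρ (σ * τ) f := by rw [h]

lemma actA_isHomogeneous (ρ : G →* (Matrix ι ι F)ˣ) (σ : G) {f : MvPolynomial ι F} {d : ℕ}
    (hf : f.IsHomogeneous d) : (actA ρ σ f).IsHomogeneous d := by
  have hg : ∀ i : ι,
      (∑ j, ((ρ σ⁻¹ : Matrix ι ι F) i j) • (X j : MvPolynomial ι F)).IsHomogeneous 1 := by
    intro i
    refine IsHomogeneous.sum _ _ _ (fun j _ => ?_)
    rw [smul_eq_C_mul]
    exact isHomogeneous_C_mul_X _ _
  have h := hf.aeval _ hg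
  rw [one_mul] at h
  exact h

lemma isInv_sum_actA [Fintype G] (ρ : G →* (Matrix ι ι F)ˣ) (g : MvPolynomial ι F) :
    IsInv ρ (∑ τ : G, actA ρ τ g) := by
  intro σ
  rw [polyAct_eq, map_sum]
  exact Fintype.sum_equiv (Equiv.mulLeft σ) _ _ (fun τ => by
    simp [actA_mul, Equiv.coe_mulLeft])

/-- Fogarty's lemma: in the non-modular case, any product of `|G|` homogeneous
polynomials of positive degree lies in the Hilbert ideal. -/
lemma prod_mem_hilbert [Fintype G] (ρ : G →* (Matrix ι ι F)ˣ)
    (hchar : (Fintype.card G : F) ≠ 0)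
    (a : G → MvPolynomial ι F) (d : G → ℕ) (hd : ∀ τ, 0 < d τ)
    (ha : ∀ τ, (a τ).IsHomogeneous (d τ)) :
    ∏ τ : G, a τ ∈ hilbertIdeal ρ := by
  classical
  set b : G → MvPolynomial ι F := fun τ => actA ρ τ⁻¹ (a τ) with hbdef
  have hb : ∀ τ, (b τ).IsHomogeneous (d τ) := fun τ => actA_isHomogeneous ρ _ (ha τ)
  set Tr : Finset G → MvPolynomial ι F :=
    fun t => ∑ σ : G, actA ρ σ (∏ τ ∈ t, -(b τ)) with hTrdef
  set Fn : Finset G → MvPolynomial ι F :=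
    fun t => Tr t * ∏ τ ∈ tᶜ, a τ with hFndef
  -- the key identity
  have key : (0 : MvPolynomial ι F) = ∑ t : Finset G, Fn t := by
    have h1 : ∀ σ : G, (0 : MvPolynomial ι F)
        = ∑ t : Finset G, actA ρ σ (∏ τ ∈ t, -(b τ)) * ∏ τ ∈ tᶜ, a τ := by
      intro σ
      have h0 : ∏ τ : G, (-(actA ρ σ (b τ)) + a τ) = 0 := by
        refine Finset.prod_eq_zero (Finset.mem_univ σ) ?_
        have : actA ρ σ (b σ) = a σ := by
          rw [hbdef]
          simp only
          rw [actA_mul, mul_inv_cancel, actA_one]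
        rw [this, neg_add_cancel]
      rw [← h0, Fintype.prod_add]
      refine Finset.sum_congr rfl fun t _ => ?_
      rw [map_prod]
      simp only [map_neg]
    calc (0 : MvPolynomial ι F) = ∑ _σ : G, (0 : MvPolynomial ι F) := by simp
    _ = ∑ σ : G, ∑ t : Finset G, actA ρ σ (∏ τ ∈ t, -(b τ)) * ∏ τ ∈ tᶜ, a τ :=
        Finset.sum_congr rfl fun σ _ => h1 σ
    _ = ∑ t : Finset G, ∑ σ : G, actA ρ σ (∏ τ ∈ t, -(b τ)) * ∏ τ ∈ tᶜ, a τ :=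
        Finset.sum_comm
    _ = ∑ t : Finset G, Fn t := by
        refine Finset.sum_congr rfl fun t _ => ?_
        rw [hFndef, hTrdef]
        simp only [Finset.sum_mul]
  -- each Fn t for t ≠ ∅ is in the Hilbert ideal
  have hFnmem : ∀ t : Finset G, t ≠ ∅ → Fn t ∈ hilbertIdeal ρ := by
    intro t ht
    have htne : t.Nonempty := Finset.nonempty_of_ne_empty ht
    have hhom : (Tr t).IsHomogeneous (∑ τ ∈ t, d τ) := by
      refine IsHomogeneous.sum _ _ _ (fun σ _ => ?_)
      refine actA_isHomogeneous ρ _ ?_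
      exact IsHomogeneous.prod _ _ _ (fun τ _ => (hb τ).neg)
    have hpos : 0 < ∑ τ ∈ t, d τ := Finset.sum_pos (fun τ _ => hd τ) htne
    have hgen : Tr t ∈ hilbertIdeal ρ := by
      refine Ideal.subset_span ⟨⟨∑ τ ∈ t, d τ, hpos, hhom⟩, ?_⟩
      exact isInv_sum_actA ρ _
    exact Ideal.mul_mem_right _ _ hgen
  -- split off the empty set
  have hsplit : Fn ∅ + ∑ t ∈ (Finset.univ : Finset (Finset G)).erase ∅, Fn t
      = ∑ t : Finset G, Fn t :=
    Finset.add_sum_erase _ _ (Finset.mem_univ _)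
  have hFe : Fn ∅ ∈ hilbertIdeal ρ := by
    have : Fn ∅ = -∑ t ∈ (Finset.univ : Finset (Finset G)).erase ∅, Fn t := by
      rw [eq_neg_iff_add_eq_zero, hsplit, ← key]
    rw [this]
    exact neg_mem (Ideal.sum_mem _ (fun t ht =>
      hFnmem t (Finset.ne_of_mem_erase ht)))
  -- Fn ∅ = card G • ∏ a
  have hFe2 : Fn ∅ = (Fintype.card G : MvPolynomial ι F) * ∏ τ : G, a τ := by
    rw [hFndef]
    simp only [hTrdef, Finset.prod_empty, map_one, Finset.compl_empty]
    rw [Finset.sum_const, Finset.card_univ, nsmul_eq_mul, mul_one]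
  -- conclude
  have hmain : (C ((Fintype.card G : F)⁻¹) : MvPolynomial ι F) * Fn ∅ = ∏ τ : G, a τ := by
    rw [hFe2, ← mul_assoc]
    have : (C ((Fintype.card G : F)⁻¹) : MvPolynomial ι F)
        * (Fintype.card G : MvPolynomial ι F) = 1 := by
      rw [← map_natCast (C : F →+* MvPolynomial ι F), ← map_mul, inv_mul_cancel₀ hchar, map_one]
    rw [this, one_mul]
  rw [← hmain]
  exact Ideal.mul_mem_left _ _ hFe

lemma prod_monomial {α : Type*} (s : Finset α) (f : α → (ι →₀ ℕ)) (c : α → F) :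
    ∏ x ∈ s, (monomial (f x) (c x) : MvPolynomial ι F)
      = monomial (∑ x ∈ s, f x) (∏ x ∈ s, c x) := by
  classical
  induction s using Finset.cons_induction with
  | empty => simp [monomial_zero']
  | cons a s ha ih =>
      rw [Finset.prod_cons, ih, Finset.sum_cons, Finset.prod_cons, monomial_mul]

lemma degree_single_one (i : ι) : (Finsupp.single i 1 : ι →₀ ℕ).degree = 1 := by
  simp [Finsupp.degree_apply, Finsupp.support_single_ne_zero i one_ne_zero]

lemma exists_decomp : ∀ (n : ℕ) (s : ι →₀ ℕ), n + 1 ≤ s.degree →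
    ∃ g : Fin (n + 1) → (ι →₀ ℕ), (∀ k, g k ≠ 0) ∧ ∑ k, g k = s := by
  intro n
  induction n with
  | zero =>
      intro s hs
      refine ⟨fun _ => s, fun k h0 => ?_, by simp⟩
      have h0' : s = 0 := h0
      rw [h0'] at hs
      simp [map_zero] at hs
  | succ n ih =>
      intro s hs
      have hs0 : s ≠ 0 := by
        intro h0
        rw [h0] at hs
        simp [map_zero] at hs
      obtain ⟨i, hi⟩ : ∃ i, s i ≠ 0 := by
        by_contra hc
        push_neg at hc
        exact hs0 (Finsupp.ext fun i => hc i)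
      have hle : Finsupp.single i 1 ≤ s :=
        Finsupp.single_le_iff.mpr (Nat.one_le_iff_ne_zero.mpr hi)
      set s' : ι →₀ ℕ := s - Finsupp.single i 1 with hs'def
      have hadd : Finsupp.single i 1 + s' = s := add_tsub_cancel_of_le hle
      have hdeg : s.degree = 1 + s'.degree := by
        have hw : ∀ u v : ι →₀ ℕ, (u + v).degree = u.degree + v.degree := by
          intro u v
          simp only [Finsupp.degree_eq_weight_one, map_add]
        rw [← hadd, hw, degree_single_one]
      have hs' : n + 1 ≤ s'.degree := by omega
      obtain ⟨g', hg'ne, hg'sum⟩ := ih s' hs'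
      refine ⟨Fin.cons (Finsupp.single i 1) g', ?_, ?_⟩
      · intro k
        refine Fin.cases ?_ ?_ k
        · simpa using Finsupp.single_ne_zero.mpr one_ne_zero
        · intro k'
          simpa using hg'ne k'
      · rw [Fin.sum_cons, hg'sum, hadd]

lemma monomial_mem_hilbert [Fintype G] (ρ : G →* (Matrix ι ι F)ˣ)
    (hchar : (Fintype.card G : F) ≠ 0) (s : ι →₀ ℕ) (c : F)
    (hs : Fintype.card G ≤ s.degree) :
    (monomial s c : MvPolynomial ι F) ∈ hilbertIdeal ρ := by
  classical
  obtain ⟨m, hm⟩ : ∃ m, Fintype.card G = m + 1 :=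
    ⟨Fintype.card G - 1, (Nat.succ_pred_eq_of_pos Fintype.card_pos).symm⟩
  obtain ⟨g, hgne, hgsum⟩ := exists_decomp m s (by omega)
  set e : G ≃ Fin (m + 1) := (Fintype.equivFinOfCardEq hm)
  set τ₀ : G := e.symm 0 with hτ₀
  set a : G → MvPolynomial ι F :=
    fun τ => monomial (g (e τ)) (if τ = τ₀ then c else 1) with hadef
  have hprod : ∏ τ : G, a τ = monomial s c := by
    rw [hadef]
    simp only
    have h1 : ∑ τ : G, g (e τ) = s := by rw [Equiv.sum_comp e g, hgsum]
    have h2 : (∏ τ : G, if τ = τ₀ then c else (1:F)) = c := by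
      rw [Finset.prod_ite_eq' Finset.univ τ₀ (fun _ => c)]
      simp
    rw [prod_monomial, h1, h2]
  rw [← hprod]
  refine prod_mem_hilbert ρ hchar a (fun τ => (g (e τ)).degree) (fun τ => ?_) (fun τ => ?_)
  · exact Nat.pos_of_ne_zero (fun h0 => hgne (e τ) ((Finsupp.degree_eq_zero_iff _).mp h0))
  · exact isHomogeneous_monomial _ rfl

lemma homog_mem_hilbert [Fintype G] (ρ : G →* (Matrix ι ι F)ˣ)
    (hchar : (Fintype.card G : F) ≠ 0) {f : MvPolynomial ι F} {n : ℕ}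
    (hf : f.IsHomogeneous n) (hn : Fintype.card G ≤ n) :
    f ∈ hilbertIdeal ρ := by
  rw [← f.support_sum_monomial_coeff]
  refine Ideal.sum_mem _ (fun s hs => ?_)
  refine monomial_mem_hilbert ρ hchar s _ ?_
  have := hf (MvPolynomial.mem_support_iff.mp hs)
  rw [Finsupp.degree_eq_weight_one]
  exact le_of_le_of_eq hn this.symm

/-- In the non-modular case, `topdeg F[V]_G + 1 ≤ |G|`. -/
theorem topDeg_succ_le_card [Fintype G] (ρ : G →* (Matrix ι ι F)ˣ)
    (hchar : (Fintype.card G : F) ≠ 0) :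
    topDeg ρ + 1 ≤ Fintype.card G := by
  have hcard : 0 < Fintype.card G := Fintype.card_pos
  have hbound : ∀ d ∈ {d : ℕ | ∃ f : MvPolynomial ι F, f.IsHomogeneous d ∧ f ∉ hilbertIdeal ρ},
      d ≤ Fintype.card G - 1 := by
    rintro d ⟨f, hf, hfH⟩
    by_contra hlt
    push_neg at hlt
    exact hfH (homog_mem_hilbert ρ hchar hf (by omega))
  have htop : topDeg ρ ≤ Fintype.card G - 1 := by
    rcases Set.eq_empty_or_nonempty
        {d : ℕ | ∃ f : MvPolynomial ι F, f.IsHomogeneous d ∧ f ∉ hilbertIdeal ρ} with he | hne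
    · rw [topDeg, he, csSup_empty]
      exact Nat.zero_le _
    · exact csSup_le hne hbound
  omega
end

section
/- Let A be a commutative ring with identity, G a finite group of ring automorphisms of A such that the order of G is invertible in A, and J ⊆ A a G-stable ideal. Then J^{|G|} ⊆ J^G · A, where J^G denotes the set of G-invariant elements of J and J^G · A is the ideal of A it generates. -/
/-!
We prove Fogarty's lemma.  The key algebraic identity (valid in any commutative
ring with an action of a finite group `G` of order `n`) is a telescoping identity:
enumerate `G` as `g_0, ..., g_{n-1}` and, for a family `v : G → A`, set

  `D k = ∑_{τ ∈ G} (∏_{i < k} v (g_i)) * ∏_{k ≤ i < n} (v (g_i) - (τ g_k⁻¹ g_i) • v (g_i))`.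

Then `D 0 = 0` (for each `τ` the factor at the slot labelled `g_0 τ⁻¹` vanishes,
using that the labelling is bijective), `D n = n * ∏_g v g`, and each difference
`D (k+1) - D k` is a combination of transfers `∑_τ τ • z` with `z ∈ J`, hence lies
in `J^G · A`.  Consequently `n * ∏_g v g ∈ J^G · A`, and invertibility of `n`
finishes the proof.
-/

open Finset

section Fogarty

variable {A : Type*} [CommRing A] {G : Type*} [Group G] [Fintype G] [MulSemiringAction G A]

/-- An enumeration of the group `G` by naturals (junk value `1` out of range). -/
private noncomputable def fogG (G : Type*) [Group G] [Fintype G] (m : ℕ) : G :=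
  if h : m < Fintype.card G then (Fintype.equivFin G).symm ⟨m, h⟩ else 1

private lemma fogG_surj (G : Type*) [Group G] [Fintype G] (w : G) :
    ∃ m, m < Fintype.card G ∧ fogG G m = w := by
  refine ⟨((Fintype.equivFin G) w : Fin (Fintype.card G)).val,
    ((Fintype.equivFin G) w).isLt, ?_⟩
  rw [fogG, dif_pos ((Fintype.equivFin G) w).isLt]
  simp

/-- The telescoping quantity `D k`. -/
private noncomputable def fogD (v : G → A) (k : ℕ) : A :=
  ∑ τ : G, (∏ i ∈ Finset.range k, v (fogG G i)) *
    ∏ i ∈ Finset.Ico k (Fintype.card G),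
      (v (fogG G i) - (τ * (fogG G k)⁻¹ * fogG G i) • v (fogG G i))

/-- The transfer `∑_τ τ • z` of an element `z ∈ J` lies in the span of the invariants
of `J`, provided `J` is `G`-stable. -/
private lemma trace_mem_span (J : Ideal A) (hJ : ∀ (σ : G), ∀ x ∈ J, σ • x ∈ J)
    {z : A} (hz : z ∈ J) :
    (∑ τ : G, τ • z) ∈ Ideal.span {x : A | x ∈ J ∧ ∀ σ : G, σ • x = x} := by
  apply Ideal.subset_span
  refine ⟨Submodule.sum_mem _ fun τ _ => hJ τ z hz, fun σ => ?_⟩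
  rw [Finset.smul_sum]
  exact Fintype.sum_equiv (Equiv.mulLeft σ) _ _ fun τ => by
    simp [Equiv.coe_mulLeft, mul_smul]

private lemma fogD_zero (v : G → A) : fogD v 0 = 0 := by
  classical
  rw [fogD]
  apply Finset.sum_eq_zero
  intro τ _
  obtain ⟨m, hm, hmw⟩ := fogG_surj G (fogG G 0 * τ⁻¹)
  have hmem : m ∈ Finset.Ico 0 (Fintype.card G) := Finset.mem_Ico.mpr ⟨Nat.zero_le _, hm⟩
  have hfac : v (fogG G m) - (τ * (fogG G 0)⁻¹ * fogG G m) • v (fogG G m) = 0 := by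
    have h1 : τ * (fogG G 0)⁻¹ * fogG G m = 1 := by
      rw [hmw]; group
    rw [h1, one_smul, sub_self]
  rw [Finset.prod_eq_zero hmem hfac, mul_zero]

private lemma fogD_card (v : G → A) :
    fogD v (Fintype.card G) = (Fintype.card G : A) * ∏ g : G, v g := by
  classical
  have hprod : (∏ i ∈ Finset.range (Fintype.card G), v (fogG G i)) = ∏ g : G, v g := by
    rw [← Fin.prod_univ_eq_prod_range (fun i => v (fogG G i)) (Fintype.card G)]
    rw [← Equiv.prod_comp (Fintype.equivFin G).symm v]
    apply Finset.prod_congr rfl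
    intro i _
    congr 1
    rw [fogG, dif_pos i.isLt]
  rw [fogD, Finset.Ico_self]
  simp only [Finset.prod_empty, mul_one]
  rw [Finset.sum_const, Finset.card_univ, hprod, nsmul_eq_mul]

/-- The key step: consecutive differences of `D` lie in the span of invariants. -/
private lemma fogD_step (J : Ideal A) (hJ : ∀ (σ : G), ∀ x ∈ J, σ • x ∈ J)
    (v : G → A) (hv : ∀ g, v g ∈ J) {k : ℕ} (hk : k < Fintype.card G) :
    fogD v (k + 1) - fogD v k ∈ Ideal.span {x : A | x ∈ J ∧ ∀ σ : G, σ • x = x} := by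
  classical
  set n := Fintype.card G with hn
  set I := Ideal.span {x : A | x ∈ J ∧ ∀ σ : G, σ • x = x} with hI
  set y : ℕ → A := fun m => v (fogG G m) with hy
  set c : A := ∏ i ∈ Finset.range k, y i with hc
  set s : Finset ℕ := Finset.Ico (k + 1) n with hs
  -- split off the bottom factor of the Ico-product in `fogD v k`
  have hsplit : fogD v k = ∑ τ : G, c * ((y k - τ • y k) *
      ∏ i ∈ s, (y i - (τ * (fogG G k)⁻¹ * fogG G i) • y i)) := by
    rw [fogD]
    apply Finset.sum_congr rfl
    intro τ _
    have h2 : τ * (fogG G k)⁻¹ * fogG G k = τ := by group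
    rw [Finset.prod_eq_prod_Ico_succ_bot hk, h2]
  -- the two pieces
  have hDk : fogD v k = (∑ τ : G, c * (y k *
        ∏ i ∈ s, (y i - (τ * (fogG G k)⁻¹ * fogG G i) • y i)))
      - ∑ τ : G, c * ((τ • y k) *
        ∏ i ∈ s, (y i - (τ * (fogG G k)⁻¹ * fogG G i) • y i)) := by
    rw [hsplit, ← Finset.sum_sub_distrib]
    apply Finset.sum_congr rfl
    intro τ _
    ring
  -- the first piece is `fogD v (k+1)` (reindex the sum over τ)
  have hfirst : (∑ τ : G, c * (y k *
      ∏ i ∈ s, (y i - (τ * (fogG G k)⁻¹ * fogG G i) • y i)))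
      = fogD v (k + 1) := by
    rw [fogD]
    refine Fintype.sum_equiv (Equiv.mulRight ((fogG G k)⁻¹ * fogG G (k + 1))) _ _ fun τ => ?_
    have hcy : c * y k = ∏ i ∈ Finset.range (k + 1), y i := by
      rw [Finset.prod_range_succ, hc]
    rw [← mul_assoc, hcy]
    congr 1
    apply Finset.prod_congr rfl
    intro i _
    have h3 : (Equiv.mulRight ((fogG G k)⁻¹ * fogG G (k + 1))) τ * (fogG G (k + 1))⁻¹ * fogG G i
        = τ * (fogG G k)⁻¹ * fogG G i := by
      simp only [Equiv.coe_mulRight]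
      group
    rw [h3]
  -- the second piece lies in I
  have hsecond : (∑ τ : G, c * ((τ • y k) *
      ∏ i ∈ s, (y i - (τ * (fogG G k)⁻¹ * fogG G i) • y i))) ∈ I := by
    -- the element whose transfer appears, for each subset t of s
    have hexp : ∀ τ : G, c * ((τ • y k) *
        ∏ i ∈ s, (y i - (τ * (fogG G k)⁻¹ * fogG G i) • y i))
        = ∑ t ∈ s.powerset, (c * ∏ i ∈ t, y i) *
            (τ • (y k * ∏ i ∈ s \ t, (-(((fogG G k)⁻¹ * fogG G i) • y i)))) := by
      intro τ
      have hfac : ∀ i ∈ s, (y i - (τ * (fogG G k)⁻¹ * fogG G i) • y i)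
          = y i + (-((τ * (fogG G k)⁻¹ * fogG G i) • y i)) := by
        intro i _
        ring
      rw [Finset.prod_congr rfl hfac, Finset.prod_add, Finset.mul_sum, Finset.mul_sum]
      apply Finset.sum_congr rfl
      intro t _
      have hsm : τ • (y k * ∏ i ∈ s \ t, (-(((fogG G k)⁻¹ * fogG G i) • y i)))
          = (τ • y k) * ∏ i ∈ s \ t, (-((τ * (fogG G k)⁻¹ * fogG G i) • y i)) := by
        rw [smul_mul']
        congr 1
        rw [show (τ • (∏ i ∈ s \ t, (-(((fogG G k)⁻¹ * fogG G i) • y i))))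
            = (MulSemiringAction.toRingHom G A τ)
              (∏ i ∈ s \ t, (-(((fogG G k)⁻¹ * fogG G i) • y i))) from rfl]
        rw [map_prod]
        apply Finset.prod_congr rfl
        intro i _
        rw [MulSemiringAction.toRingHom_apply, smul_neg, smul_smul, mul_assoc]
      rw [hsm]
      ring
    rw [Finset.sum_congr rfl fun τ _ => hexp τ, Finset.sum_comm]
    apply Submodule.sum_mem
    intro t _
    rw [← Finset.mul_sum]
    apply Ideal.mul_mem_left
    apply trace_mem_span J hJ
    exact Ideal.mul_mem_right _ _ (hv _)
  -- conclude
  have : fogD v (k + 1) - fogD v k = ∑ τ : G, c * ((τ • y k) *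
      ∏ i ∈ s, (y i - (τ * (fogG G k)⁻¹ * fogG G i) • y i)) := by
    rw [hDk, hfirst]
    ring
  rw [this]
  exact hsecond

/-- Core lemma: a product of elements of a `G`-stable ideal indexed by the group
itself lies in the span of the invariants of `J`, provided `|G|` is invertible. -/
private lemma prod_mem_span (hunit : IsUnit ((Fintype.card G : A)))
    (J : Ideal A) (hJ : ∀ (σ : G), ∀ x ∈ J, σ • x ∈ J)
    (v : G → A) (hv : ∀ g, v g ∈ J) :
    (∏ g : G, v g) ∈ Ideal.span {x : A | x ∈ J ∧ ∀ σ : G, σ • x = x} := by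
  classical
  set I := Ideal.span {x : A | x ∈ J ∧ ∀ σ : G, σ • x = x} with hI
  have hmem : ∀ k, k ≤ Fintype.card G → fogD v k ∈ I := by
    intro k
    induction k with
    | zero => intro _; rw [fogD_zero]; exact zero_mem I
    | succ k ih =>
      intro hk1
      have hk : k < Fintype.card G := Nat.lt_of_succ_le hk1
      have h1 := ih (Nat.le_of_lt hk)
      have h2 := fogD_step J hJ v hv hk
      have h3 : fogD v (k + 1) = fogD v k + (fogD v (k + 1) - fogD v k) := by ring
      rw [h3]
      exact add_mem h1 h2
  have hcard : ((Fintype.card G : A) * ∏ g : G, v g) ∈ I := by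
    rw [← fogD_card]
    exact hmem _ le_rfl
  obtain ⟨b, hb⟩ := hunit.exists_left_inv
  have : (∏ g : G, v g) = b * ((Fintype.card G : A) * ∏ g : G, v g) := by
    rw [← mul_assoc, hb, one_mul]
  rw [this]
  exact Ideal.mul_mem_left _ _ hcard

end Fogarty

/-- **Fogarty's lemma.** If a finite group `G` acts on a commutative
ring `A` by ring automorphisms, `|G|` is invertible in `A`, and `J ⊆ A` is a
`G`-stable ideal, then `J^{|G|} ⊆ J^G · A`. -/
theorem pow_card_le_span_invariants {A : Type*} [CommRing A] {G : Type*} [Group G]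
    [Fintype G] [MulSemiringAction G A] (hunit : IsUnit ((Fintype.card G : A)))
    (J : Ideal A) (hJ : ∀ (σ : G), ∀ x ∈ J, σ • x ∈ J) :
    J ^ (Fintype.card G) ≤ Ideal.span {x : A | x ∈ J ∧ ∀ σ : G, σ • x = x} := by
  classical
  rw [Submodule.pow_eq_span_pow_set, Submodule.span_le]
  rintro a ha
  rw [Set.mem_pow] at ha
  obtain ⟨f, rfl⟩ := ha
  rw [List.prod_ofFn]
  have key := prod_mem_span hunit J hJ
    (fun g => (f ((Fintype.equivFin G) g) : A)) (fun g => (f ((Fintype.equivFin G) g)).2)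
  rwa [Equiv.prod_comp (Fintype.equivFin G) (fun i => (f i : A))] at key
end
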